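/- Let θ be a reflexive and transitive binary relation on {1, 2, ..., n} and let R be a PI-ring (a PI-algebra over ℤ ⊆ Z(R)). If A ∈ M_n(θ,R) is invertible in M_n(R), then A⁻¹ ∈ M_n(θ,R). -/

import Mathlib

/-- A PI-ring (a PI-algebra over `ℤ ⊆ Z(R)`): a ring satisfying a polynomial identity,
i.e. there is a nonzero polynomial in noncommuting variables over `ℤ` (monomials are
words, encoded as lists of variable indices), at least one of whose monomials of highest
total degree has coefficient `1`, which vanishes under every substitution of elements
of `R`. -/
def IsPIRing (R : Type*) [Ring R] : Prop :=
  ∃ (k : ℕ) (F : Finset (List (Fin k))) (c : List (Fin k) → ℤ),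
    (∃ w ∈ F, c w ≠ 0) ∧
    (∃ w ∈ F, c w = 1 ∧ ∀ w' ∈ F, c w' ≠ 0 → w'.length ≤ w.length) ∧
    ∀ v : Fin k → R, ∑ w ∈ F, c w • (w.map v).prod = 0

universe u v w

theorem LP {α : Type*} (l L : List α) (a : α) (h : l <+: L) :
    (l ++ [a]) <+: L ↔ L[l.length]? = some a := by
  constructor
  · rintro ⟨t, ht⟩
    rw [← ht, List.append_assoc, List.getElem?_append_right le_rfl]
    simp
  · intro hget
    obtain ⟨t, ht⟩ := h
    subst ht
    rw [List.getElem?_append_right le_rfl, Nat.sub_self] at hget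
    cases t with
    | nil => simp at hget
    | cons b t' =>
      simp only [List.getElem?_cons_zero, Option.some.injEq] at hget
      subst hget
      exact ⟨t', by simp⟩


section Density

variable {R : Type u} [Ring R] (N : Type v) [AddCommGroup N] [Module R N] [IsSimpleModule R N]

theorem density : ∀ (j : ℕ) (x : Fin j → N), LinearIndependent (Module.End R N) x →
    ∀ y : Fin j → N, ∃ r : R, ∀ i, r • x i = y i := by
  intro j
  induction j with
  | zero => exact fun x _ y => ⟨0, fun i => i.elim0⟩
  | succ j IH =>
    intro x hx y
    have hx' : LinearIndependent (Module.End R N) (x ∘ Fin.castSucc) :=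
      hx.comp _ (Fin.castSucc_injective j)
    set x' : Fin j → N := x ∘ Fin.castSucc with hx'def
    set l : Fin (j + 1) := Fin.last j with hldef
    let I : Ideal R :=
      { carrier := {r | ∀ i : Fin j, r • x' i = 0}
        add_mem' := fun {a b} ha hb i => by rw [add_smul, ha i, hb i, add_zero]
        zero_mem' := fun i => zero_smul _ _
        smul_mem' := fun c {a} ha i => by
          rw [smul_eq_mul, mul_smul, ha i, smul_zero] }
    have hImem : ∀ r : R, r ∈ I ↔ ∀ i : Fin j, r • x' i = 0 := fun r => Iff.rfl
    let L : Submodule R N := Submodule.map (LinearMap.toSpanSingleton R N (x l)) I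
    rcases eq_bot_or_eq_top L with hL | hL
    · -- L = ⊥ : derive a contradiction with independence
      exfalso
      have U : ∀ r r' : R, (∀ i : Fin j, r • x' i = r' • x' i) → r • x l = r' • x l := by
        intro r r' h
        have hI : r - r' ∈ I := fun i => by rw [sub_smul, h i, sub_self]
        have hmem : (r - r') • x l ∈ L := Submodule.mem_map.mpr
          ⟨r - r', hI, LinearMap.toSpanSingleton_apply R N (x l) _⟩
        rw [hL, Submodule.mem_bot, sub_smul, sub_eq_zero] at hmem
        exact hmem
      have rep : ∀ (i : Fin j) (z : N), ∃ r : R, ∀ t, r • x' t = (Pi.single i z : Fin j → N) t :=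
        fun i z => IH x' hx' (Pi.single i z)
      let di : Fin j → Module.End R N := fun i =>
        { toFun := fun z => (rep i z).choose • x l
          map_add' := by
            intro z z'
            refine (U _ ((rep i z).choose + (rep i z').choose) ?_).trans (add_smul _ _ _)
            intro t
            rw [(rep i (z + z')).choose_spec t, add_smul, (rep i z).choose_spec t,
              (rep i z').choose_spec t, Pi.single_add, Pi.add_apply]
          map_smul' := by
            intro r'' z
            refine (U _ (r'' * (rep i z).choose) ?_).trans ?_
            · intro t
              rw [(rep i (r'' • z)).choose_spec t, mul_smul, (rep i z).choose_spec t,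
                Pi.single_smul, Pi.smul_apply]
            · rw [mul_smul]; rfl }
      have key : x l = ∑ i, di i (x' i) := by
        have h1 : ∀ t, (∑ i, (rep i (x' i)).choose) • x' t = (1 : R) • x' t := by
          intro t
          rw [Finset.sum_smul, one_smul]
          have : ∀ i, (rep i (x' i)).choose • x' t = (Pi.single i (x' i) : Fin j → N) t :=
            fun i => (rep i (x' i)).choose_spec t
          rw [Finset.sum_congr rfl fun i _ => this i]
          exact (Finset.sum_apply t Finset.univ _).symm.trans
            (congrFun (Finset.univ_sum_single x') t)
        have h2 := U _ _ h1
        rw [one_smul, Finset.sum_smul] at h2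
        exact h2.symm
      have hnt : Nontrivial N := IsSimpleModule.nontrivial R N
      have hone : (1 : Module.End R N) ≠ 0 := by
        intro h
        obtain ⟨z, hz⟩ := exists_ne (0 : N)
        exact hz (by rw [← one_smul (Module.End R N) z, h, zero_smul])
      set g : Fin (j + 1) → Module.End R N := Fin.snoc di (-1) with hg
      have hsum : ∑ a, g a • x a = 0 := by
        rw [Fin.sum_univ_castSucc]
        have h1 : ∀ i : Fin j, g (Fin.castSucc i) • x (Fin.castSucc i) = di i (x' i) := by
          intro i
          rw [hg, Fin.snoc_castSucc]
          rfl
        have h2 : g (Fin.last j) • x (Fin.last j) = -(x l) := by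
          rw [hg, Fin.snoc_last, neg_smul, one_smul]
        rw [Finset.sum_congr rfl fun i _ => h1 i, h2, ← key, add_neg_cancel]
      have := Fintype.linearIndependent_iff.mp hx g hsum (Fin.last j)
      rw [hg, Fin.snoc_last] at this
      exact hone (by rw [← neg_neg (1 : Module.End R N), this, neg_zero])
    · -- L = ⊤ : build the element
      obtain ⟨r₁, hr₁⟩ := IH x' hx' (y ∘ Fin.castSucc)
      have hz : y l - r₁ • x l ∈ L := by rw [hL]; trivial
      obtain ⟨r₂, hr₂I, hr₂⟩ := Submodule.mem_map.mp hz
      refine ⟨r₁ + r₂, fun i => ?_⟩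
      refine Fin.lastCases ?_ (fun t => ?_) i
      · rw [add_smul, ← hldef]
        rw [LinearMap.toSpanSingleton_apply] at hr₂
        rw [hr₂]; abel
      · have := hr₂I t
        rw [add_smul]
        have hx'' : x (Fin.castSucc t) = x' t := rfl
        rw [hx'', this, add_zero, hr₁ t]
        rfl

end Density


theorem no_indep {R : Type u} [Ring R] {k : ℕ} {F : Finset (List (Fin k))}
    {c : List (Fin k) → ℤ} {w₀ : List (Fin k)} (hw₀F : w₀ ∈ F) (hc₀ : c w₀ = 1)
    (hid : ∀ v : Fin k → R, ∑ w ∈ F, c w • (w.map v).prod = 0)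
    {d : ℕ} (hd : w₀.length = d)
    (N : Type v) [AddCommGroup N] [Module R N] [IsSimpleModule R N]
    (x : Fin (d + 1) → N) : ¬ LinearIndependent (Module.End R N) x := by
  classical
  intro hx
  set u₀ := w₀.reverse with hu₀
  have hu₀len : u₀.length = d := by rw [hu₀, List.length_reverse, hd]
  set X : ℕ → N := fun s => if h : s < d + 1 then x ⟨s, h⟩ else 0 with hX
  have hXx : ∀ s : Fin (d + 1), X (s : ℕ) = x s := fun s => dif_pos s.isLt
  have hv : ∀ i : Fin k, ∃ r : R, ∀ s : Fin (d + 1),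
      r • x s = if u₀[(s : ℕ)]? = some i then X ((s : ℕ) + 1) else 0 :=
    fun i => density N (d + 1) x hx _
  choose v hv using hv
  have H : ∀ (i : Fin k) (s : ℕ), s ≤ d →
      v i • X s = if u₀[s]? = some i then X (s + 1) else 0 := by
    intro i s hs
    have hs' : s < d + 1 := Nat.lt_succ_of_le hs
    have hXs : X s = x ⟨s, hs'⟩ := dif_pos hs'
    rw [hXs]
    exact hv i ⟨s, hs'⟩
  have WL : ∀ w : List (Fin k),
      ((w.map v).prod) • X 0 = if w.reverse <+: u₀ then X w.length else 0 := by
    intro w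
    induction w with
    | nil => simp [List.nil_prefix]
    | cons i w' ih =>
      rw [List.map_cons, List.prod_cons, mul_smul, ih]
      by_cases hp : w'.reverse <+: u₀
      · rw [if_pos hp]
        have hlen : w'.length ≤ d := by
          have := hp.length_le
          rwa [List.length_reverse, hu₀len] at this
        rw [H i w'.length hlen]
        have hiff := LP w'.reverse u₀ i hp
        rw [List.length_reverse] at hiff
        by_cases hq : u₀[w'.length]? = some i
        · rw [if_pos hq, if_pos, List.length_cons]
          rw [List.reverse_cons]
          exact hiff.mpr hq
        · rw [if_neg hq, if_neg]
          rw [List.reverse_cons]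
          exact fun hcon => hq (hiff.mp hcon)
      · rw [if_neg hp, smul_zero, if_neg]
        intro hcon
        rw [List.reverse_cons] at hcon
        exact hp ((List.prefix_append w'.reverse [i]).trans hcon)
  have h1 : ∑ w ∈ F, c w • (((w.map v).prod) • X 0) = 0 := by
    have h2 : ∑ w ∈ F, c w • (((w.map v).prod) • X 0)
        = (∑ w ∈ F, c w • (w.map v).prod) • X 0 := by
      rw [Finset.sum_smul]
      exact Finset.sum_congr rfl fun w _ => (smul_assoc (c w) _ _).symm
    rw [h2, hid v, zero_smul]
  simp only [WL, smul_ite, smul_zero] at h1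
  rw [Finset.sum_ite, Finset.sum_const_zero, add_zero] at h1
  set Fp := F.filter (fun w => w.reverse <+: u₀) with hFp
  have hmaps : ∀ w ∈ Fp, w.length ∈ Finset.range (d + 1) := by
    intro w hw
    rw [hFp, Finset.mem_filter] at hw
    have := hw.2.length_le
    rw [List.length_reverse, hu₀len] at this
    exact Finset.mem_range.mpr (Nat.lt_succ_of_le this)
  rw [← Finset.sum_fiberwise_of_maps_to hmaps (fun w => c w • X w.length)] at h1
  have h3 : ∑ ℓ ∈ Finset.range (d + 1),
      (∑ w ∈ Fp.filter (fun w => w.length = ℓ), c w) • X ℓ = 0 := by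
    rw [← h1]
    refine Finset.sum_congr rfl fun ℓ _ => ?_
    rw [Finset.sum_smul]
    exact Finset.sum_congr rfl fun w hw => by rw [(Finset.mem_filter.mp hw).2]
  rw [← Fin.sum_univ_eq_sum_range
    (fun ℓ => (∑ w ∈ Fp.filter (fun w => w.length = ℓ), c w) • X ℓ) (d + 1)] at h3
  set g : Fin (d + 1) → Module.End R N :=
    fun s => (∑ w ∈ Fp.filter (fun w => w.length = (s : ℕ)), c w) • (1 : Module.End R N)
    with hg
  have hgs : ∀ s, g s • x s = (∑ w ∈ Fp.filter (fun w => w.length = (s : ℕ)), c w) • x s := by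
    intro s
    show (g s) (x s) = _
    rw [hg]
    rw [LinearMap.smul_apply, Module.End.one_apply]
  have hsum : ∑ s, g s • x s = 0 := by
    rw [Finset.sum_congr rfl fun s _ => hgs s, ← h3]
    exact Finset.sum_congr rfl fun s _ => by rw [hXx s]
  have hlast := Fintype.linearIndependent_iff.mp hx g hsum (Fin.last d)
  have hset : Fp.filter (fun w => w.length = ((Fin.last d : Fin (d + 1)) : ℕ)) = {w₀} := by
    ext w
    simp only [hFp, Finset.filter_filter, Finset.mem_filter, Finset.mem_singleton, Fin.val_last]
    constructor
    · rintro ⟨hwF, hpref, hlen⟩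
      have hrev : w.reverse = u₀ := hpref.eq_of_length (by rw [List.length_reverse, hu₀len, hlen])
      have := congrArg List.reverse hrev
      rwa [List.reverse_reverse, hu₀, List.reverse_reverse] at this
    · rintro rfl
      exact ⟨hw₀F, by rw [hu₀], hd⟩
  rw [hg] at hlast
  simp only [hset] at hlast
  rw [Finset.sum_singleton, hc₀, one_smul] at hlast
  have hnt : Nontrivial N := IsSimpleModule.nontrivial R N
  obtain ⟨z, hz⟩ := exists_ne (0 : N)
  exact hz (by rw [← Module.End.one_apply (R := R) z, hlast, LinearMap.zero_apply])


theorem simple_findim {R : Type u} [Ring R] {k : ℕ} {F : Finset (List (Fin k))}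
    {c : List (Fin k) → ℤ} {w₀ : List (Fin k)} (hw₀F : w₀ ∈ F) (hc₀ : c w₀ = 1)
    (hid : ∀ v : Fin k → R, ∑ w ∈ F, c w • (w.map v).prod = 0)
    (N : Type v) [AddCommGroup N] [Module R N] [IsSimpleModule R N] :
    Module.Finite (Module.End R N) N := by
  classical
  haveI : DecidableEq (Module.End R N) := Classical.decEq _
  by_contra hfd
  set b := Module.Basis.ofVectorSpace (Module.End R N) N with hb
  have hfin : Finite ↥(Module.Basis.ofVectorSpaceIndex (Module.End R N) N) → False := by
    intro hfin
    exact hfd (Module.Finite.of_basis b)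
  have hinf : Infinite ↥(Module.Basis.ofVectorSpaceIndex (Module.End R N) N) :=
    not_finite_iff_infinite.mp hfin
  let e : ℕ ↪ ↥(Module.Basis.ofVectorSpaceIndex (Module.End R N) N) := Infinite.natEmbedding _
  let f : Fin (w₀.length + 1) ↪ ↥(Module.Basis.ofVectorSpaceIndex (Module.End R N) N) :=
    (Fin.valEmbedding).trans e
  exact no_indep hw₀F hc₀ hid rfl N (fun s => b (f s))
    (b.linearIndependent.comp f f.injective)


theorem entries_annihilate {R : Type u} [Ring R] {m : Type w} [Fintype m] [DecidableEq m]
    (A B : Matrix m m R) (hAB : A * B = 1)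
    (N : Type v) [AddCommGroup N] [Module R N] [IsSimpleModule R N]
    [Module.Finite (Module.End R N) N] :
    ∀ (s t : m) (y : N), ((1 : Matrix m m R) - B * A) s t • y = 0 := by
  classical
  haveI : DecidableEq (Module.End R N) := Classical.decEq _
  haveI : Module.Finite (Module.End R N) (m → N) := Module.Finite.pi
  let Φ : Matrix m m R → ((m → N) →ₗ[Module.End R N] (m → N)) := fun C =>
    { toFun := fun ξ s => ∑ t, C s t • ξ t
      map_add' := by
        intro ξ η
        funext s
        simp [smul_add, Finset.sum_add_distrib]
      map_smul' := by
        intro δ ξ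
        funext s
        show ∑ t, C s t • ((δ • ξ) t) = δ • ((fun s => ∑ t, C s t • ξ t) s)
        have h1 : ∀ t : m, (δ • ξ) t = δ (ξ t) := fun t => rfl
        have h2 : δ • (∑ t, C s t • ξ t) = δ (∑ t, C s t • ξ t) := rfl
        rw [h2, map_sum]
        exact Finset.sum_congr rfl fun t _ => by rw [h1 t, ← map_smul] }
  have hmul : ∀ (C C' : Matrix m m R) (ξ : m → N), Φ C (Φ C' ξ) = Φ (C * C') ξ := by
    intro C C' ξ
    funext s
    show ∑ t, C s t • (∑ t', C' t t' • ξ t') = ∑ t', (C * C') s t' • ξ t'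
    calc ∑ t, C s t • (∑ t', C' t t' • ξ t')
        = ∑ t, ∑ t', (C s t * C' t t') • ξ t' := by
          refine Finset.sum_congr rfl fun t _ => ?_
          rw [Finset.smul_sum]
          exact Finset.sum_congr rfl fun t' _ => smul_smul (C s t) (C' t t') (ξ t')
      _ = ∑ t', ∑ t, (C s t * C' t t') • ξ t' := Finset.sum_comm
      _ = ∑ t', (C * C') s t' • ξ t' := by
          refine Finset.sum_congr rfl fun t' _ => ?_
          rw [Matrix.mul_apply, Finset.sum_smul]
  have hone : ∀ ξ : m → N, Φ 1 ξ = ξ := by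
    intro ξ
    funext s
    show ∑ t, (1 : Matrix m m R) s t • ξ t = ξ s
    rw [Finset.sum_congr rfl fun t (_ : t ∈ Finset.univ) => by
      rw [Matrix.one_apply, ite_smul, one_smul, zero_smul]]
    exact Finset.sum_ite_eq Finset.univ s ξ |>.trans (if_pos (Finset.mem_univ s))
  have hsurj : Function.Surjective (Φ A) := fun ξ =>
    ⟨Φ B ξ, by rw [hmul, hAB, hone]⟩
  have hinj : Function.Injective (Φ A) := LinearMap.injective_iff_surjective.mpr hsurj
  have hBA : ∀ ξ, Φ (B * A) ξ = ξ := by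
    intro ξ
    rw [← hmul]
    apply hinj
    rw [hmul A B (Φ A ξ), hAB, hone]
  intro s t y
  have h3 := congrFun (hBA (Pi.single t y)) s
  have h4 : (∑ t', (B * A) s t' • (Pi.single t y : m → N) t') = (B * A) s t • y := by
    rw [Finset.sum_eq_single t]
    · rw [Pi.single_eq_same]
    · intro b _ hb
      rw [Pi.single_eq_of_ne hb, smul_zero]
    · intro hs; exact absurd (Finset.mem_univ t) hs
  have h5 : (B * A) s t • y = (Pi.single t y : m → N) s := by rw [← h4]; exact h3
  rw [Matrix.sub_apply, sub_smul, h5]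
  have h6 : (1 : Matrix m m R) s t • y = (Pi.single t y : m → N) s := by
    rw [Matrix.one_apply, Pi.single_apply]
    by_cases hst : s = t
    · rw [if_pos hst, if_pos hst, one_smul]
    · rw [if_neg hst, if_neg hst, zero_smul]
  rw [h6, sub_self]


theorem Tinv {R : Type u} [Ring R] (r : R)
    (hr : ∀ (N : Type u) [AddCommGroup N] [Module R N] [IsSimpleModule R N],
      ∀ y : N, r • y = 0) :
    ∃ u : R, u * (1 - r) = 1 := by
  by_cases h : (Ideal.span {1 - r} : Ideal R) = ⊤
  · have h1 : (1 : R) ∈ (Ideal.span {1 - r} : Ideal R) := h ▸ Submodule.mem_top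
    obtain ⟨u, hu⟩ := Submodule.mem_span_singleton.mp h1
    exact ⟨u, by rwa [smul_eq_mul] at hu⟩
  · exfalso
    obtain ⟨K, hKmax, hKle⟩ := Ideal.exists_le_maximal _ h
    haveI hsimp : IsSimpleModule R (R ⧸ K) :=
      isSimpleModule_iff_isCoatom.mpr (Ideal.isMaximal_def.mp hKmax)
    have h2 := hr (R ⧸ K) (Submodule.Quotient.mk 1)
    rw [← Submodule.Quotient.mk_smul, smul_eq_mul, mul_one,
      Submodule.Quotient.mk_eq_zero] at h2
    have h3 : (1 : R) - r ∈ K := hKle (Ideal.subset_span rfl)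
    have h4 : (1 : R) ∈ K := by
      have := K.add_mem h3 h2
      rwa [sub_add_cancel] at this
    exact hKmax.ne_top (K.eq_top_iff_one.mpr h4)

theorem nak {R : Type u} [Ring R] (T : R → Prop)
    (hTadd : ∀ a b, T a → T b → T (a + b))
    (hTmulr : ∀ a x, T a → T (a * x))
    (hTinv : ∀ a, T a → ∃ u, u * (1 - a) = 1) :
    ∀ (j : ℕ) (M : Type v) [AddCommGroup M] [Module R M] (v : Fin j → M)
      (a : Fin j → Fin j → R), (∀ s t, T (a s t)) →
      (∀ s, v s = ∑ t, a s t • v t) → ∀ s, v s = 0 := by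
  intro j
  induction j with
  | zero => intro M _ _ v a _ _ s; exact s.elim0
  | succ j IH =>
    intro M _ _ v a hT heq
    obtain ⟨u, hu⟩ := hTinv _ (hT (Fin.last j) (Fin.last j))
    have hvl : v (Fin.last j)
        = u • ∑ t : Fin j, a (Fin.last j) t.castSucc • v t.castSucc := by
      have h1 : v (Fin.last j) = (∑ t : Fin j, a (Fin.last j) t.castSucc • v t.castSucc)
          + a (Fin.last j) (Fin.last j) • v (Fin.last j) := by
        have := heq (Fin.last j); rwa [Fin.sum_univ_castSucc] at this
      have h2 : (1 - a (Fin.last j) (Fin.last j)) • v (Fin.last j)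
          = ∑ t : Fin j, a (Fin.last j) t.castSucc • v t.castSucc := by
        rw [sub_smul, one_smul]
        nth_rewrite 1 [h1]
        rw [add_sub_cancel_right]
      calc v (Fin.last j) = (1 : R) • v (Fin.last j) := (one_smul _ _).symm
        _ = (u * (1 - a (Fin.last j) (Fin.last j))) • v (Fin.last j) := by rw [hu]
        _ = u • ((1 - a (Fin.last j) (Fin.last j)) • v (Fin.last j)) := mul_smul _ _ _
        _ = _ := by rw [h2]
    have hz : ∀ t : Fin j, v t.castSucc = 0 := by
      have := IH M (fun t => v t.castSucc)
        (fun s t => a s.castSucc t.castSucc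
          + a s.castSucc (Fin.last j) * u * a (Fin.last j) t.castSucc)
        (fun s t => hTadd _ _ (hT _ _)
          (hTmulr _ _ (hTmulr _ _ (hT s.castSucc (Fin.last j)))))
        ?_
      · exact this
      intro s
      have h := heq s.castSucc
      rw [Fin.sum_univ_castSucc, hvl] at h
      have h3 : a s.castSucc (Fin.last j)
            • (u • ∑ t : Fin j, a (Fin.last j) t.castSucc • v t.castSucc)
          = ∑ t : Fin j, (a s.castSucc (Fin.last j) * u * a (Fin.last j) t.castSucc)
            • v t.castSucc := by
        rw [smul_smul, Finset.smul_sum]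
        exact Finset.sum_congr rfl fun t _ => by rw [smul_smul, mul_assoc]
      rw [h3, ← Finset.sum_add_distrib] at h
      show v s.castSucc = _
      rw [h]
      exact Finset.sum_congr rfl fun t _ => (add_smul _ _ _).symm
    intro s
    refine Fin.lastCases ?_ (fun t => hz t) s
    rw [hvl, Finset.sum_congr rfl fun t (_ : t ∈ Finset.univ) => by rw [hz t, smul_zero],
      Finset.sum_const_zero, smul_zero]


theorem core {R : Type u} [Ring R] (hPI : IsPIRing R) {m : Type w} [Fintype m] [DecidableEq m]
    (A B : Matrix m m R) (h : A * B = 1) : B * A = 1 := by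
  classical
  obtain ⟨k, F, c, -, ⟨w₀, hw₀F, hc₀, hmax⟩, hid⟩ := hPI
  set E := (1 : Matrix m m R) - B * A with hE
  have hBABA : (B * A) * (B * A) = B * A := by
    have h2 : A * (B * A) = A := by rw [← mul_assoc, h, one_mul]
    rw [mul_assoc, h2]
  have hEE : E * E = E := by
    rw [hE, sub_mul, one_mul, mul_sub, mul_one, hBABA, sub_self, sub_zero]
  have hTE : ∀ s t : m, ∀ (N : Type u) [AddCommGroup N] [Module R N]
      [IsSimpleModule R N], ∀ y : N, E s t • y = 0 := by
    intro s t N _ _ _ y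
    haveI := simple_findim hw₀F hc₀ hid N
    exact entries_annihilate A B h N s t y
  have hTadd : ∀ a b : R, (∀ (N : Type u) [AddCommGroup N] [Module R N]
      [IsSimpleModule R N], ∀ y : N, a • y = 0) → (∀ (N : Type u) [AddCommGroup N]
      [Module R N] [IsSimpleModule R N], ∀ y : N, b • y = 0) →
      (∀ (N : Type u) [AddCommGroup N] [Module R N] [IsSimpleModule R N],
        ∀ y : N, (a + b) • y = 0) := by
    intro a b ha hb N _ _ _ y
    rw [add_smul, ha N y, hb N y, add_zero]
  have hTmulr : ∀ a x : R, (∀ (N : Type u) [AddCommGroup N] [Module R N]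
      [IsSimpleModule R N], ∀ y : N, a • y = 0) →
      (∀ (N : Type u) [AddCommGroup N] [Module R N] [IsSimpleModule R N],
        ∀ y : N, (a * x) • y = 0) := by
    intro a x ha N _ _ _ y
    rw [mul_smul]
    exact ha N _
  set n := Fintype.card m with hn
  set e : m ≃ Fin n := Fintype.equivFin m with he
  set v : Fin n → (m → R) := fun s => fun t' => E (e.symm s) t' with hv
  set a : Fin n → Fin n → R := fun s t => E (e.symm s) (e.symm t) with ha
  have heq : ∀ s, v s = ∑ t, a s t • v t := by
    intro s
    funext t'
    calc v s t' = (E * E) (e.symm s) t' := by rw [hEE]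
      _ = ∑ u', E (e.symm s) u' * E u' t' := Matrix.mul_apply
      _ = ∑ t : Fin n, E (e.symm s) (e.symm t) * E (e.symm t) t' :=
          (Equiv.sum_comp e.symm (fun u' => E (e.symm s) u' * E u' t')).symm
      _ = ∑ t : Fin n, (a s t • v t) t' := Finset.sum_congr rfl fun t _ => rfl
      _ = (∑ t, a s t • v t) t' := (Finset.sum_apply t' Finset.univ _).symm
  have hrows := nak (fun r : R => ∀ (N : Type u) [AddCommGroup N] [Module R N]
      [IsSimpleModule R N], ∀ y : N, r • y = 0) hTadd hTmulr
      (fun r hr => Tinv r hr) n (m → R) v a (fun s t => hTE _ _) heq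
  have hE0 : E = 0 := by
    ext s t
    have h5 := congrFun (hrows (e s)) t
    rw [hv] at h5
    simp only [Equiv.symm_apply_apply] at h5
    exact h5
  have h0 : (1 : Matrix m m R) - B * A = 0 := hE ▸ hE0
  exact (sub_eq_zero.mp h0).symm


/-- Let `θ` be a reflexive and transitive binary relation on `{1, …, n}` and let `R` be
a PI-ring.  If `A ∈ Mₙ(θ,R)` is invertible in `Mₙ(R)`, then `A⁻¹ ∈ Mₙ(θ,R)`. -/
theorem stmt_15 {R : Type*} [Ring R] (hPI : IsPIRing R)
    {n : ℕ} (θ : Fin n → Fin n → Prop)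
    (hrefl : ∀ i, θ i i) (htrans : ∀ i j k, θ i j → θ j k → θ i k)
    (A : (Matrix (Fin n) (Fin n) R)ˣ)
    (hA : ∀ i j, ¬ θ i j → A.val i j = 0) :
    ∀ i j, ¬ θ i j → (A⁻¹).val i j = 0 := by
  classical
  intro i j hij
  set p : Fin n → Prop := fun u => θ u j with hp
  set σ : {x // p x} ⊕ {x // ¬p x} ≃ Fin n := Equiv.sumCompl p with hσ
  set A' := (A.val).submatrix σ σ with hA'
  set B' := ((A⁻¹).val).submatrix σ σ with hB'
  have hAB : A' * B' = 1 := by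
    rw [hA', hB', Matrix.submatrix_mul_equiv, A.mul_inv, Matrix.submatrix_one_equiv]
  have hBA : B' * A' = 1 := by
    rw [hA', hB', Matrix.submatrix_mul_equiv, A.inv_mul, Matrix.submatrix_one_equiv]
  have h21 : A'.toBlocks₂₁ = 0 := by
    ext u v
    show A.val (σ (Sum.inr u)) (σ (Sum.inl v)) = (0 : Matrix _ _ R) u v
    rw [Matrix.zero_apply]
    have hσr : σ (Sum.inr u) = (u : Fin n) := by rw [hσ]; exact Equiv.sumCompl_apply_inr (p := p) u
    have hσl : σ (Sum.inl v) = (v : Fin n) := by rw [hσ]; exact Equiv.sumCompl_apply_inl (p := p) v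
    rw [hσr, hσl]
    exact hA _ _ (fun hθ => u.2 (htrans _ _ _ hθ v.2))
  have hA'blocks : A' = Matrix.fromBlocks A'.toBlocks₁₁ A'.toBlocks₁₂ 0 A'.toBlocks₂₂ := by
    rw [← h21, Matrix.fromBlocks_toBlocks]
  have hB'blocks : B' = Matrix.fromBlocks B'.toBlocks₁₁ B'.toBlocks₁₂ B'.toBlocks₂₁
      B'.toBlocks₂₂ := (Matrix.fromBlocks_toBlocks B').symm
  rw [hA'blocks, hB'blocks, Matrix.fromBlocks_multiply, ← Matrix.fromBlocks_one] at hBA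
  have e1 := congrArg Matrix.toBlocks₁₁ hBA
  have e2 := congrArg Matrix.toBlocks₂₁ hBA
  simp only [Matrix.toBlocks_fromBlocks₁₁, Matrix.toBlocks_fromBlocks₂₁,
    Matrix.mul_zero, add_zero] at e1 e2
  have hPX : A'.toBlocks₁₁ * B'.toBlocks₁₁ = 1 := core hPI _ _ e1
  have hZ : B'.toBlocks₂₁ = 0 := by
    calc B'.toBlocks₂₁ = B'.toBlocks₂₁ * (A'.toBlocks₁₁ * B'.toBlocks₁₁) := by
          rw [hPX, Matrix.mul_one]
      _ = (B'.toBlocks₂₁ * A'.toBlocks₁₁) * B'.toBlocks₁₁ := by rw [Matrix.mul_assoc]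
      _ = 0 := by rw [e2, Matrix.zero_mul]
  have hfinal := congrFun (congrFun hZ ⟨i, hij⟩) ⟨j, hrefl j⟩
  have : B' (Sum.inr ⟨i, hij⟩) (Sum.inl ⟨j, hrefl j⟩) = 0 := hfinal
  rw [hB'] at this
  have hσr : σ (Sum.inr ⟨i, hij⟩) = i := by rw [hσ]; exact Equiv.sumCompl_apply_inr (p := p) _
  have hσl : σ (Sum.inl ⟨j, hrefl j⟩) = j := by rw [hσ]; exact Equiv.sumCompl_apply_inl (p := p) _
  show (A⁻¹).val i j = 0
  rw [← hσr, ← hσl]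
  exact this
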